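/- Let p ≥ 5 be a prime and set n := 2^(p−1). Define rational numbers a_0, a_1, …, a_{n/4} recursively by a_0 = 2 and a_{j+1} = −((n² − (4j)²) / ((2j+2)·(2j+1))) · a_j for 0 ≤ j < n/4. Then 2^p − 1 is prime if and only if there exists an integer m such that, in the rational numbers, ∑_{j=0}^{n/4} a_j = (2^p − 1) · m. -/

import Mathlib

namespace LLM3


/-- coefficient `c m j = (-16)^j * (C(m+j,2j) + C(m+j-1,2j))` -/
def c (m j : ℕ) : ℤ := (-16) ^ j * ((m + j).choose (2 * j) + (m + j - 1).choose (2 * j))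

/-- telescoping auxiliary -/
def u (m j : ℕ) : ℤ := 16 * (-16) ^ j * ((m + j + 1).choose (2 * j) + (m + j).choose (2 * j))

def S (m : ℕ) : ℤ := ∑ j ∈ Finset.range (m + 1), c m j

lemma c_zero (m : ℕ) : c m 0 = 2 := by simp [c]

lemma c_eq_zero_of_lt {m j : ℕ} (h : m < j) : c m j = 0 := by
  have h1 : (m + j).choose (2 * j) = 0 := Nat.choose_eq_zero_of_lt (by omega)
  have h2 : (m + j - 1).choose (2 * j) = 0 := Nat.choose_eq_zero_of_lt (by omega)
  simp [c, h1, h2]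

lemma pascal (n k : ℕ) : (n + 1).choose (k + 1) = n.choose k + n.choose (k + 1) :=
  Nat.choose_succ_succ n k

/-- Key Pascal identity (I2). -/
lemma I2 (m i : ℕ) :
    (m + i + 3).choose (2 * i + 2) + 15 * (m + i + 2).choose (2 * i + 2)
      + 15 * (m + i + 1).choose (2 * i + 2) + (m + i).choose (2 * i + 2)
    = 16 * (m + i + 2).choose (2 * i + 2) + 16 * (m + i + 1).choose (2 * i + 2)
      + (m + i + 1).choose (2 * i) + (m + i).choose (2 * i) := by
  have h1 : (m + i + 1).choose (2 * i + 1) = (m + i).choose (2 * i) + (m + i).choose (2 * i + 1) :=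
    pascal _ _
  have h2 : (m + i + 1).choose (2 * i + 2) =
      (m + i).choose (2 * i + 1) + (m + i).choose (2 * i + 2) := pascal _ _
  have h3 : (m + i + 2).choose (2 * i + 2) =
      (m + i + 1).choose (2 * i + 1) + (m + i + 1).choose (2 * i + 2) := pascal _ _
  have h4 : (m + i + 2).choose (2 * i + 1) =
      (m + i + 1).choose (2 * i) + (m + i + 1).choose (2 * i + 1) := pascal _ _
  have h5 : (m + i + 3).choose (2 * i + 2) =
      (m + i + 2).choose (2 * i + 1) + (m + i + 2).choose (2 * i + 2) := pascal _ _
  omega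



lemma csr (n k : ℕ) : n.choose (k+1) * (k+1) = n.choose k * (n - k) :=
  Nat.choose_succ_right_eq n k

/-- Key product identity (I1): recurrence for the coefficients. -/
lemma I1 (j r : ℕ) :
    ((2*j+r+2).choose (2*j+2) + (2*j+r+1).choose (2*j+2)) * ((2*j+2)*(2*j+1))
      = (r+1) * ((2*j+r+1) * ((2*j+r+1).choose (2*j) + (2*j+r).choose (2*j))) := by
  have e1 : (2*j+r+2).choose (2*j+2) * (2*j+2) = (2*j+r+2).choose (2*j+1) * (r+1) := by
    have := csr (2*j+r+2) (2*j+1); rwa [show (2*j+r+2) - (2*j+1) = r+1 by omega] at this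
  have e2 : (2*j+r+2).choose (2*j+1) * (2*j+1) = (2*j+r+2).choose (2*j) * (r+2) := by
    have := csr (2*j+r+2) (2*j); rwa [show (2*j+r+2) - (2*j) = r+2 by omega] at this
  have e3 : (2*j+r+1).choose (2*j+2) * (2*j+2) = (2*j+r+1).choose (2*j+1) * r := by
    have := csr (2*j+r+1) (2*j+1); rwa [show (2*j+r+1) - (2*j+1) = r by omega] at this
  have e4 : (2*j+r+1).choose (2*j+1) * (2*j+1) = (2*j+r+1).choose (2*j) * (r+1) := by
    have := csr (2*j+r+1) (2*j); rwa [show (2*j+r+1) - (2*j) = r+1 by omega] at this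
  have e5 : (2*j+r+1).choose (2*j) * (2*j+r+2) = (2*j+r+2).choose (2*j) * (r+2) := by
    have := Nat.choose_mul_succ_eq (2*j+r+1) (2*j)
    rwa [show (2*j+r+1+1) - (2*j) = r+2 by omega, show 2*j+r+1+1 = 2*j+r+2 by omega] at this
  have e6 : (2*j+r).choose (2*j) * (2*j+r+1) = (2*j+r+1).choose (2*j) * (r+1) := by
    have := Nat.choose_mul_succ_eq (2*j+r) (2*j)
    rwa [show (2*j+r+1) - (2*j) = r+1 by omega, show 2*j+r+1 = 2*j+r+1 from rfl] at this
  zify at e1 e2 e3 e4 e5 e6 ⊢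
  linear_combination (2*j+1) * e1 + (r+1) * e2 + (2*j+1) * e3 + r * e4 - (r+1) * e5
    + (-(r+1)) * e6





def L (m j : ℕ) : ℤ := c (m + 2) j + 14 * c (m + 1) j + c m j

lemma L_zero (m : ℕ) : L m 0 = u m 0 := by simp [L, c_zero, u]

lemma L_succ (m j : ℕ) : L m (j + 1) = u m (j + 1) - u m j := by
  have key := I2 m j
  have h1 : m + 2 + (j + 1) = m + j + 3 := by omega
  have h2 : m + 2 + (j + 1) - 1 = m + j + 2 := by omega
  have h3 : m + 1 + (j + 1) = m + j + 2 := by omega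
  have h4 : m + 1 + (j + 1) - 1 = m + j + 1 := by omega
  have h5 : m + (j + 1) = m + j + 1 := by omega
  have h6 : m + (j + 1) - 1 = m + j := by omega
  have h7 : 2 * (j + 1) = 2 * j + 2 := by omega
  have h8 : m + (j + 1) + 1 = m + j + 2 := by omega
  rw [L, c, c, c, u, u, h2, h4, h6, h1, h3, h5, h7, show m+j+1+1 = m+j+2 by omega]
  have kz : ((m + j + 3).choose (2 * j + 2) : ℤ) + 15 * (m + j + 2).choose (2 * j + 2)
      + 15 * (m + j + 1).choose (2 * j + 2) + (m + j).choose (2 * j + 2)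
    = 16 * (m + j + 2).choose (2 * j + 2) + 16 * (m + j + 1).choose (2 * j + 2)
      + (m + j + 1).choose (2 * j) + (m + j).choose (2 * j) := by exact_mod_cast key
  have hp : ((-16 : ℤ)) ^ (j + 1) = (-16) * (-16) ^ j := by ring
  rw [hp]
  linear_combination ((-16 : ℤ) * (-16) ^ j) * kz

lemma sum_L (m K : ℕ) : ∑ j ∈ Finset.range (K + 1), L m j = u m K := by
  induction K with
  | zero => simpa using L_zero m
  | succ K ih => rw [Finset.sum_range_succ, ih, L_succ]; ring

lemma u_top (m : ℕ) : u m (m + 2) = 0 := by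
  have h1 : (m + (m + 2) + 1).choose (2 * (m + 2)) = 0 := Nat.choose_eq_zero_of_lt (by omega)
  have h2 : (m + (m + 2)).choose (2 * (m + 2)) = 0 := Nat.choose_eq_zero_of_lt (by omega)
  simp [u, h1, h2]

lemma S_rec (m : ℕ) : S (m + 2) + 14 * S (m + 1) + S m = 0 := by
  have h := sum_L m (m + 2)
  rw [u_top] at h
  have expand : ∑ j ∈ Finset.range (m + 3), L m j
      = (∑ j ∈ Finset.range (m + 3), c (m + 2) j)
        + 14 * (∑ j ∈ Finset.range (m + 3), c (m + 1) j)
        + ∑ j ∈ Finset.range (m + 3), c m j := by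
    simp [L, Finset.sum_add_distrib, Finset.mul_sum]
  have e1 : ∑ j ∈ Finset.range (m + 3), c (m + 2) j = S (m + 2) := by rfl
  have e2 : ∑ j ∈ Finset.range (m + 3), c (m + 1) j = S (m + 1) := by
    rw [show m + 3 = (m + 2) + 1 by omega, Finset.sum_range_succ,
      c_eq_zero_of_lt (by omega), S]
    simp
  have e3 : ∑ j ∈ Finset.range (m + 3), c m j = S m := by
    rw [show m + 3 = (m + 2) + 1 by omega, Finset.sum_range_succ, c_eq_zero_of_lt (by omega),
      show m + 2 = (m + 1) + 1 by omega, Finset.sum_range_succ, c_eq_zero_of_lt (by omega), S]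
    simp
  rw [show m + 2 + 1 = m + 3 by omega] at h
  rw [expand, e1, e2, e3] at h
  linarith





def φ : ℤ√3 := ⟨-7, -4⟩
def ψ : ℤ√3 := ⟨-7, 4⟩

lemma phi_mul_psi : φ * ψ = 1 := by ext <;> simp [φ, ψ, Zsqrtd.re_mul, Zsqrtd.im_mul] <;> ring

lemma phi_sq : φ ^ 2 = -14 * φ - 1 := by
  ext <;> simp [φ, pow_two, Zsqrtd.re_mul, Zsqrtd.im_mul] <;> ring

lemma psi_sq : ψ ^ 2 = -14 * ψ - 1 := by
  ext <;> simp [ψ, pow_two, Zsqrtd.re_mul, Zsqrtd.im_mul] <;> ring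

lemma S_zero : S 0 = 2 := by decide
lemma S_one : S 1 = -14 := by decide

lemma S_closed_form : ∀ m : ℕ, (S m : ℤ√3) = φ ^ m + ψ ^ m := by
  have key : ∀ m : ℕ, ((S m : ℤ√3) = φ ^ m + ψ ^ m) ∧
      ((S (m+1) : ℤ√3) = φ ^ (m+1) + ψ ^ (m+1)) := by
    intro m
    induction m with
    | zero =>
      constructor
      · rw [S_zero]; push_cast; norm_num
      · rw [S_one]; simp only [zero_add, pow_one]; ext <;> simp [φ, ψ, Zsqrtd.re_add, Zsqrtd.im_add]
    | succ m ih =>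
      refine ⟨ih.2, ?_⟩
      have hr : S (m + 2) = -14 * S (m + 1) - S m := by have := S_rec m; linarith
      have : (S (m+2) : ℤ√3) = -14 * (S (m+1) : ℤ√3) - (S m : ℤ√3) := by
        rw [hr]; push_cast; ring
      rw [this, ih.1, ih.2]
      have hφ : φ ^ (m + 2) = -14 * φ ^ (m+1) - φ ^ m := by
        have : φ ^ (m + 2) = φ ^ m * φ ^ 2 := by ring
        rw [this, phi_sq]; ring
      have hψ : ψ ^ (m + 2) = -14 * ψ ^ (m+1) - ψ ^ m := by
        have : ψ ^ (m + 2) = ψ ^ m * ψ ^ 2 := by ring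
        rw [this, psi_sq]; ring
      rw [hφ, hψ]; ring
  exact fun m => (key m).1

lemma S_doubling (m : ℕ) : S (2 * m) = S m ^ 2 - 2 := by
  have h : (S (2 * m) : ℤ√3) = ((S m ^ 2 - 2 : ℤ) : ℤ√3) := by
    push_cast
    rw [S_closed_form, S_closed_form]
    have : (φ ^ m + ψ ^ m) ^ 2 = φ ^ (2*m) + ψ ^ (2*m) + 2 * (φ * ψ) ^ m := by
      rw [mul_pow]; ring
    rw [this, phi_mul_psi]; ring
  exact_mod_cast h

lemma S_two : S 2 = 194 := by decide

lemma S_pow_two (k : ℕ) (hk : 1 ≤ k) : S (2 ^ k) = LucasLehmer.s (k + 1) := by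
  induction k with
  | zero => omega
  | succ k ih =>
    rcases Nat.eq_or_lt_of_le hk with h | h
    · have : k = 0 := by omega
      subst this
      rw [show (2:ℕ)^1 = 2 from rfl, S_two]
      show (194 : ℤ) = LucasLehmer.s 1 ^ 2 - 2
      rw [show LucasLehmer.s 1 = LucasLehmer.s 0 ^ 2 - 2 from rfl]
      rfl
    · have hk1 : 1 ≤ k := by omega
      rw [pow_succ, mul_comm, S_doubling, ih hk1]
      rfl



open LucasLehmer

lemma X_pow_scalar {q : ℕ+} (x : X q) (hx : x.2 = 0) (k : ℕ) :
    (x ^ k).1 = x.1 ^ k ∧ (x ^ k).2 = 0 := by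
  induction k with
  | zero => simp
  | succ k ih => rw [pow_succ, pow_succ, X.mul_fst, X.mul_snd, ih.1, ih.2, hx]; constructor <;> ring

/-- Necessity direction of the Lucas-Lehmer test. -/
lemma necessity (p : ℕ) (hp5 : 5 ≤ p) (hp : Nat.Prime p)
    (hQ : Nat.Prime (2 ^ p - 1)) : ((2 ^ p - 1 : ℕ) : ℤ) ∣ LucasLehmer.s (p - 2) := by
  set Q : ℕ := 2 ^ p - 1 with hQdef
  have hppos : 1 ≤ 2 ^ p := Nat.one_le_two_pow
  have h2p : 2 ^ p = 8 * 2 ^ (p - 3) := by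
    have h := pow_add 2 3 (p - 3)
    rw [show (2:ℕ)^3 = 8 by norm_num] at h
    rw [← h]; congr 1; omega
  have hQbig : 31 ≤ Q := by
    have : 2 ^ 5 ≤ 2 ^ p := Nat.pow_le_pow_right (by norm_num) (by omega)
    omega
  have hQ8 : Q % 8 = 7 := by omega
  have hQ4 : Q % 4 = 3 := by omega
  have hQ3 : Q % 3 = 1 := by
    have hodd : Odd p := hp.odd_of_ne_two (by omega)
    obtain ⟨k, hk⟩ := hodd
    have h4 : 4 ^ k % 3 = 1 := by rw [Nat.pow_mod]; norm_num
    have : 2 ^ p = 2 * 4 ^ k := by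
      rw [hk, pow_succ, pow_mul]; norm_num; ring
    omega
  haveI : Fact Q.Prime := ⟨hQ⟩
  -- 2 is a square mod Q
  have h2ne : (2 : ZMod Q) ≠ 0 := by
    have : ((2 : ℕ) : ZMod Q) ≠ 0 := by
      rw [Ne, ZMod.natCast_eq_zero_iff]
      intro h; have := Nat.le_of_dvd (by norm_num) h; omega
    simpa using this
  have h2pow : (2 : ZMod Q) ^ (Q / 2) = 1 :=
    (ZMod.euler_criterion Q h2ne).mp
      ((ZMod.exists_sq_eq_two_iff (by omega : Q ≠ 2)).mpr (Or.inr hQ8))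
  -- 3 is not a square mod Q
  have h3ne : (3 : ZMod Q) ≠ 0 := by
    have : ((3 : ℕ) : ZMod Q) ≠ 0 := by
      rw [Ne, ZMod.natCast_eq_zero_iff]
      intro h; have := Nat.le_of_dvd (by norm_num) h; omega
    simpa using this
  have hsqQ3 : IsSquare ((Q : ℕ) : ZMod 3) := by
    have h1 : ((Q : ℕ) : ZMod 3) = ((Q % 3 : ℕ) : ZMod 3) := (ZMod.natCast_mod Q 3).symm
    rw [h1, hQ3]
    simpa using isSquare_one
  have hns3 : ¬IsSquare (3 : ZMod Q) := by
    have h3 : IsSquare ((Q : ℕ) : ZMod 3) ↔ ¬IsSquare (((3:ℕ) : ZMod Q)) :=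
      ZMod.exists_sq_eq_prime_iff_of_mod_four_eq_three (p := 3) (q := Q)
        (by norm_num) hQ4 (by omega)
    have := h3.mp hsqQ3
    simpa using this
  have h3pow : (3 : ZMod Q) ^ (Q / 2) = -1 := by
    rcases ZMod.pow_div_two_eq_neg_one_or_one Q h3ne with h | h
    · exact absurd ((ZMod.euler_criterion Q h3ne).mpr h) hns3
    · exact h
  -- move to X q'
  set q' : ℕ+ := ⟨Q, by omega⟩ with hq'
  haveI : Fact (1 < (q' : ℕ)) := ⟨by show 1 < Q; omega⟩
  haveI charX : CharP (X q') Q := by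
    constructor
    intro a
    constructor
    · intro h
      have h1 : (a : X q').1 = 0 := by rw [h]; rfl
      rw [X.fst_natCast] at h1
      exact (ZMod.natCast_eq_zero_iff a Q).mp h1
    · intro h
      ext
      · rw [X.fst_natCast, X.zero_fst]
        exact (ZMod.natCast_eq_zero_iff a Q).mpr h
      · rw [X.snd_natCast, X.zero_snd]
  set σ : X q' := (0, 1) with hσdef
  have hσ1 : σ.1 = 0 := rfl
  have hσ2 : σ.2 = 1 := rfl
  have h31 : ((3 : X q')).1 = (3 : ZMod (q' : ℕ)) := rfl
  have h32 : ((3 : X q')).2 = 0 := rfl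
  have h21 : ((2 : X q')).1 = (2 : ZMod (q' : ℕ)) := rfl
  have h22 : ((2 : X q')).2 = 0 := rfl
  have hω1 : (X.ω : X q').1 = (2 : ZMod (q' : ℕ)) := rfl
  have hω2 : (X.ω : X q').2 = (1 : ZMod (q' : ℕ)) := rfl
  have hσ_sq : σ * σ = (3 : X q') := by
    ext
    · rw [X.mul_fst, hσ1, hσ2, h31]; ring
    · rw [X.mul_snd, hσ1, hσ2, h32]; ring
  have hQodd : Q = 2 * (Q / 2) + 1 := by omega
  -- σ ^ Q = -σ
  have hσQ : σ ^ Q = -σ := by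
    have h1 : σ ^ Q = (σ * σ) ^ (Q / 2) * σ := by
      conv_lhs => rw [hQodd]
      rw [pow_succ, pow_mul, sq σ]
    have h2 : ((3 : X q')) ^ (Q / 2) = -1 := by
      have h3s := X_pow_scalar (3 : X q') h32 (Q / 2)
      ext
      · rw [h3s.1, h31, (show (3 : ZMod (q' : ℕ)) ^ (Q / 2) = -1 from h3pow), X.neg_fst, X.one_fst]
      · rw [h3s.2, X.neg_snd, X.one_snd, neg_zero]
    rw [h1, hσ_sq, h2]
    ring
  have hfrob : (1 + σ) ^ Q = 1 - σ := by
    rw [add_pow_char 1 σ Q, one_pow, hσQ]; ring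
  have hτ : (1 + σ) ^ (Q + 1) = (-2 : X q') := by
    rw [pow_succ, hfrob, show (1 - σ) * (1 + σ) = 1 - σ * σ by ring, hσ_sq]
    ring
  have hτsq : (1 + σ) * (1 + σ) = 2 * X.ω := by
    ext <;>
      simp only [X.mul_fst, X.mul_snd, X.add_fst, X.add_snd, X.one_fst, X.one_snd,
        hσ1, hσ2, h21, h22, hω1, hω2] <;> ring
  -- 2 ^ (2^(p-1)) = 2 in X q'
  have hexp : 2 ^ (p - 1) = Q / 2 + 1 := by
    have h := pow_add 2 1 (p - 1)
    rw [show 1 + (p-1) = p by omega] at h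
    omega
  have h2X : ((2 : X q')) ^ (2 ^ (p - 1)) = (2 : X q') := by
    have h2s := X_pow_scalar (2 : X q') h22 (2 ^ (p - 1))
    ext
    · rw [h2s.1, h21, hexp, pow_succ, (show (2 : ZMod (q' : ℕ)) ^ (Q / 2) = 1 from h2pow), one_mul]
    · rw [h2s.2, h22]
  -- ω ^ (2^(p-1)) = -1
  have hωpow : (X.ω : X q') ^ (2 ^ (p - 1)) = -1 := by
    have h2p1 : Q + 1 = 2 ^ (p - 1) * 2 := by
      have h := pow_add 2 (p - 1) 1
      rw [show (p-1) + 1 = p by omega] at h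
      omega
    have key : (2 : X q') * (X.ω : X q') ^ (2 ^ (p - 1)) = (2 : X q') * (-1) := by
      have e1 : (1 + σ) ^ (Q + 1) = ((1 + σ) * (1 + σ)) ^ (2 ^ (p - 1)) := by
        rw [← sq, ← pow_mul, show 2 * 2 ^ (p-1) = Q + 1 by omega]
      rw [hτsq, mul_pow, h2X] at e1
      rw [← e1, hτ]
      ring
    -- cancel the 2
    have c1 := congrArg Prod.fst key
    have c2 := congrArg Prod.snd key
    rw [X.mul_fst, X.mul_fst, h21, h22] at c1
    rw [X.mul_snd, X.mul_snd, h21, h22] at c2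
    simp only [zero_mul, mul_zero, add_zero, zero_add] at c1 c2
    haveI : Fact (Nat.Prime (q' : ℕ)) := ⟨hQ⟩
    have h2ne' : (2 : ZMod (q' : ℕ)) ≠ 0 := h2ne
    have c2' : (2 : ZMod (q' : ℕ)) * ((X.ω : X q') ^ 2 ^ (p - 1)).2
        = (2 : ZMod (q' : ℕ)) * ((-1 : X q')).2 := c2
    have c1' : (2 : ZMod (q' : ℕ)) * ((X.ω : X q') ^ 2 ^ (p - 1)).1
        = (2 : ZMod (q' : ℕ)) * ((-1 : X q')).1 := c1
    ext
    · exact mul_left_cancel₀ h2ne' c1'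
    · exact mul_left_cancel₀ h2ne' c2'
  -- conclude s (p-2) ≡ 0
  have hclosed := LucasLehmer.X.closed_form (q := q') (p - 2)
  have hmul : (X.ω : X q') ^ (2 ^ (p - 2)) * ((LucasLehmer.s (p - 2) : ℤ) : X q') = 0 := by
    rw [hclosed, mul_add, ← pow_add,
      show 2 ^ (p-2) + 2 ^ (p-2) = 2 ^ (p-1) by
        have h := pow_add 2 1 (p - 2)
        rw [show 1 + (p-2) = p - 1 by omega] at h
        omega,
      hωpow]
    have : (X.ω : X q') ^ (2 ^ (p-2)) * (X.ωb : X q') ^ (2 ^ (p-2))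
        = ((X.ω * X.ωb : X q')) ^ (2 ^ (p-2)) := (mul_pow _ _ _).symm
    rw [this, X.ω_mul_ωb, one_pow]
    ring
  have hsz : ((LucasLehmer.s (p - 2) : ℤ) : X q') = 0 := by
    have hb := congrArg (fun z => (X.ωb : X q') ^ (2 ^ (p - 2)) * z) hmul
    simp only [mul_zero] at hb
    rw [← mul_assoc, show (X.ωb : X q') ^ (2 ^ (p-2)) * (X.ω : X q') ^ (2 ^ (p-2))
      = ((X.ωb * X.ω : X q')) ^ (2 ^ (p-2)) from (mul_pow _ _ _).symm,
      X.ωb_mul_ω, one_pow, one_mul] at hb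
    exact hb
  have hfst : ((LucasLehmer.s (p - 2) : ℤ) : ZMod Q) = 0 := by
    have := congrArg Prod.fst hsz
    rwa [X.fst_intCast, X.zero_fst] at this
  exact (ZMod.intCast_zmod_eq_zero_iff_dvd _ Q).mp hfst





lemma a_eq (m : ℕ) (a : ℕ → ℚ) (ha0 : a 0 = 2)
    (harec : ∀ j < m, a (j + 1) =
      -((4 * (m : ℚ)) ^ 2 - (4 * (j : ℚ)) ^ 2) / ((2 * (j : ℚ) + 2) * (2 * (j : ℚ) + 1)) * a j) :
    ∀ j ≤ m, a j = (c m j : ℚ) := by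
  intro j
  induction j with
  | zero => intro _; rw [ha0, c_zero]; norm_num
  | succ j ih =>
    intro hj1
    have hj : j < m := by omega
    obtain ⟨r, hr⟩ : ∃ r, m = j + r + 1 := ⟨m - j - 1, by omega⟩
    have ihv := ih (by omega)
    rw [harec j hj, ihv]
    subst hr
    have hD : ((2 * (j : ℚ) + 2) * (2 * (j : ℚ) + 1)) ≠ 0 := by positivity
    have I1q : (((2*j+r+2).choose (2*j+2) : ℚ) + ((2*j+r+1).choose (2*j+2) : ℚ))
          * ((2*(j:ℚ)+2)*(2*(j:ℚ)+1))
        = ((r:ℚ)+1) * ((2*(j:ℚ)+(r:ℚ)+1)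
          * (((2*j+r+1).choose (2*j) : ℚ) + ((2*j+r).choose (2*j) : ℚ))) := by
      exact_mod_cast I1 j r
    have hc1 : (c (j+r+1) (j+1) : ℚ)
        = (-16:ℚ)^(j+1)
          * (((2*j+r+2).choose (2*j+2) : ℚ) + ((2*j+r+1).choose (2*j+2) : ℚ)) := by
      rw [c, show j+r+1+(j+1)-1 = 2*j+r+1 by omega, show j+r+1+(j+1) = 2*j+r+2 by omega,
        show 2*(j+1) = 2*j+2 by omega]
      push_cast; ring
    have hc0 : (c (j+r+1) j : ℚ)
        = (-16:ℚ)^j * (((2*j+r+1).choose (2*j) : ℚ) + ((2*j+r).choose (2*j) : ℚ)) := by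
      rw [c, show j+r+1+j-1 = 2*j+r by omega, show j+r+1+j = 2*j+r+1 by omega]
      push_cast; ring
    rw [hc1, hc0]
    have hcast : ((j+r+1 : ℕ) : ℚ) = (j:ℚ)+(r:ℚ)+1 := by push_cast; ring
    rw [hcast]
    rw [div_mul_eq_mul_div, div_eq_iff hD]
    linear_combination ((16:ℚ) * (-16:ℚ)^j) * I1q



end LLM3

/-- Lucas–Lehmer–Moustafa primality test for Mersenne numbers, Version 3. -/
theorem mersenne_prime_iff_phi_sum (p : ℕ) (hp : Nat.Prime p) (hp5 : 5 ≤ p)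
    (n : ℕ) (hn : n = 2 ^ (p - 1)) (a : ℕ → ℚ)
    (ha0 : a 0 = 2)
    (harec : ∀ j < n / 4,
      a (j + 1) =
        -(((n : ℚ) ^ 2 - (4 * (j : ℚ)) ^ 2) / ((2 * (j : ℚ) + 2) * (2 * (j : ℚ) + 1))) * a j) :
    Nat.Prime (2 ^ p - 1) ↔
      ∃ m : ℤ, (∑ j ∈ Finset.range (n / 4 + 1), a j) = ((2 : ℚ) ^ p - 1) * (m : ℚ) := by
  have hn4 : n = 4 * 2 ^ (p - 3) := by
    rw [hn, show p - 1 = 2 + (p - 3) by omega, pow_add]; norm_num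
  set m : ℕ := 2 ^ (p - 3) with hmdef
  have hdiv : n / 4 = m := by omega
  have hm1 : 1 ≤ m := Nat.one_le_two_pow
  have hnQ : (n : ℚ) = 4 * (m : ℚ) := by rw [hn4]; push_cast; ring
  have harec' : ∀ j < m, a (j + 1) =
      -((4 * (m : ℚ)) ^ 2 - (4 * (j : ℚ)) ^ 2)
        / ((2 * (j : ℚ) + 2) * (2 * (j : ℚ) + 1)) * a j := by
    intro j hj
    rw [harec j (by omega), hnQ]
    ring
  have haeq := LLM3.a_eq m a ha0 harec'
  have hsum : (∑ j ∈ Finset.range (n / 4 + 1), a j) = ((LLM3.S m : ℤ) : ℚ) := by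
    rw [hdiv, LLM3.S]
    push_cast
    exact Finset.sum_congr rfl fun j hj => haeq j (by
      have := Finset.mem_range.mp hj; omega)
  have hS : LLM3.S m = LucasLehmer.s (p - 2) := by
    rw [hmdef, LLM3.S_pow_two (p - 3) (by omega), show p - 3 + 1 = p - 2 by omega]
  rw [hsum, hS]
  have hone : (1 : ℕ) ≤ 2 ^ p := Nat.one_le_two_pow
  have hcast : (((2 ^ p - 1 : ℕ) : ℤ) : ℚ) = (2 : ℚ) ^ p - 1 := by
    rw [Int.coe_nat_two_pow_pred]
    push_cast; ring
  constructor
  · intro hQ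
    obtain ⟨k, hk⟩ := LLM3.necessity p hp5 hp hQ
    refine ⟨k, ?_⟩
    rw [hk]
    push_cast [← hcast]
    ring
  · rintro ⟨k, hk⟩
    have hint : LucasLehmer.s (p - 2) = ((2 ^ p - 1 : ℕ) : ℤ) * k := by
      have : ((LucasLehmer.s (p - 2) : ℤ) : ℚ) = ((((2 ^ p - 1 : ℕ) : ℤ) * k : ℤ) : ℚ) := by
        rw [hk]; push_cast [← hcast]; ring
      exact_mod_cast this
    have h0 : ((LucasLehmer.s (p - 2) : ℤ) : ZMod (2 ^ p - 1)) = 0 := by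
      rw [hint]
      push_cast
      rw [ZMod.natCast_self]
      ring
    have hres : LucasLehmer.lucasLehmerResidue p = 0 := by
      have hz := LucasLehmer.sZMod_eq_s (p - 2) (p - 2)
      rw [show p - 2 + 2 = p by omega] at hz
      rw [LucasLehmer.lucasLehmerResidue, hz, h0]
    have := lucas_lehmer_sufficiency p (by omega) hres
    exact this
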